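/- The Jones projection implements the state tr(D·) (Markov property): for every x ∈ Mₙ(ℂ), e * (x ⊗ₖ 1) * e = trace(D * x) • e, and likewise e * (1 ⊗ₖ x) * e = trace(D * x) • e, where 1 denotes the n×n identity matrix. -/

import Mathlib

open Matrix
open scoped Kronecker

/-- Markov property: the Jones projection implements the state `tr(D·)`:
`e * (x ⊗ₖ 1) * e = trace(D * x) • e` and `e * (1 ⊗ₖ x) * e = trace(D * x) • e`. -/
theorem jones_projection_implements_state
    (n : ℕ) (hn : 1 ≤ n) (lam : Fin n → ℝ)
    (hpos : ∀ i, 0 < lam i) (hsum : ∑ i, lam i = 1)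
    (D : Matrix (Fin n) (Fin n) ℂ)
    (hD : D = Matrix.diagonal (fun i => (lam i : ℂ)))
    (E : Fin n → Fin n → Matrix (Fin n) (Fin n) ℂ)
    (hE : ∀ i j, E i j = Matrix.single i j (1 : ℂ))
    (e : Matrix (Fin n × Fin n) (Fin n × Fin n) ℂ)
    (he : e = ∑ i, ∑ j, ((Real.sqrt (lam i * lam j) : ℝ) : ℂ) • (E i j ⊗ₖ E i j)) :
    ∀ x : Matrix (Fin n) (Fin n) ℂ,
      e * (x ⊗ₖ (1 : Matrix (Fin n) (Fin n) ℂ)) * e = Matrix.trace (D * x) • e ∧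
      e * ((1 : Matrix (Fin n) (Fin n) ℂ) ⊗ₖ x) * e = Matrix.trace (D * x) • e := by
  have he' : ∀ a b c d, e (a,b) (c,d) =
      if a = b ∧ c = d then ((Real.sqrt (lam a * lam c) : ℝ):ℂ) else 0 := by
    subst he
    intro a b c d
    simp only [hE, Matrix.sum_apply, Matrix.smul_apply, Matrix.kroneckerMap_apply,
      Matrix.single, Matrix.of_apply, smul_eq_mul, ite_and, mul_ite, mul_one, mul_zero,
      ite_mul, zero_mul]
    rw [Finset.sum_comm]
    simp only [Finset.sum_ite_irrel, Finset.sum_ite_eq, Finset.mem_univ, if_true,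
      Finset.sum_ite_eq', Finset.sum_const_zero]
    split_ifs with h1 h2 h3 h4 h5 h6 <;> simp_all
  intro x
  have htr : Matrix.trace (D * x) = ∑ p, (lam p : ℂ) * x p p := by
    subst hD
    simp [Matrix.trace, Matrix.diag, Matrix.mul_apply, Matrix.diagonal]
  rw [htr]
  constructor <;>
  · ext ⟨a,b⟩ ⟨c,d⟩
    simp only [Matrix.mul_apply, Matrix.smul_apply, Matrix.kroneckerMap_apply, Matrix.one_apply,
      Fintype.sum_prod_type, smul_eq_mul, he', ite_and, mul_ite, mul_one, mul_zero, ite_mul,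
      zero_mul, one_mul, Finset.sum_ite_irrel, Finset.sum_ite_eq, Finset.sum_ite_eq',
      Finset.mem_univ, if_true, Finset.sum_const_zero, Finset.mul_sum, Finset.sum_mul]
    have hsqrt : ∀ p : Fin n,
        ((Real.sqrt (lam a * lam p) : ℝ):ℂ) * ((Real.sqrt (lam p * lam c) : ℝ):ℂ)
        = (lam p : ℂ) * ((Real.sqrt (lam a * lam c) : ℝ):ℂ) := by
      intro p
      have h : Real.sqrt (lam a * lam p) * Real.sqrt (lam p * lam c)
          = lam p * Real.sqrt (lam a * lam c) := by
        rw [Real.sqrt_mul (hpos a).le, Real.sqrt_mul (hpos p).le,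
          Real.sqrt_mul (hpos a).le (lam c),
          show Real.sqrt (lam a) * Real.sqrt (lam p) * (Real.sqrt (lam p) * Real.sqrt (lam c))
            = (Real.sqrt (lam p) * Real.sqrt (lam p)) * (Real.sqrt (lam a) * Real.sqrt (lam c))
            by ring, Real.mul_self_sqrt (hpos p).le]
      rw [← Complex.ofReal_mul, ← Complex.ofReal_mul, h]
    split_ifs <;> try rfl
    refine Finset.sum_congr rfl fun p _ => ?_
    linear_combination x p p * hsqrt p
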